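/- Let X, Y, Z, X', Y', Z', f_x, f_y, b, δ be real numbers with f_x > 0, f_y > 0, δ ≥ 0, b ≥ 0, and 0 < Z' ≤ Z. Suppose that for all θ ∈ [−b, b], |f_x·(X·cos θ + Y·sin θ)/Z − f_x·(X'·cos θ + Y'·sin θ)/Z'| ≤ δ and |f_y·(Y·cos θ + X·sin θ)/Z − f_y·(Y'·cos θ + X'·sin θ)/Z'| ≤ δ. Then max (⨆_{θ ∈ [−b,b]} f_x·|Y·cos θ − X·sin θ|/Z) (⨆_{θ ∈ [−b,b]} f_y·|X·cos θ − Y·sin θ|/Z) ≤ max (⨆_{θ ∈ [−b,b]} f_x·|Y'·cos θ − X'·sin θ|/Z') (⨆_{θ ∈ [−b,b]} f_y·|X'·cos θ − Y'·sin θ|/Z') + max (f_x/f_y) (f_y/f_x) · δ. -/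

import Mathlib

/-- z-axis rotation case of the paper's Lemma D.2 (Lipschitz relaxation):
if the projection of `(X, Y, Z)` is `δ`-close in each coordinate to that of a
known point `(X', Y', Z')` with smaller depth for every rotation angle
`θ ∈ [-b, b]`, then `L_P ≤ L_{P'} + max (fx/fy) (fy/fx) · δ`. -/
theorem lipschitz_relaxation_rotation_z (X Y Z X' Y' Z' fx fy b δ : ℝ)
    (hfx : 0 < fx) (hfy : 0 < fy) (hδ : 0 ≤ δ) (hb : 0 ≤ b)
    (hZ' : 0 < Z') (hZ : Z' ≤ Z)
    (h1 : ∀ θ ∈ Set.Icc (-b) b,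
      |fx * (X * Real.cos θ + Y * Real.sin θ) / Z -
        fx * (X' * Real.cos θ + Y' * Real.sin θ) / Z'| ≤ δ)
    (h2 : ∀ θ ∈ Set.Icc (-b) b,
      |fy * (Y * Real.cos θ + X * Real.sin θ) / Z -
        fy * (Y' * Real.cos θ + X' * Real.sin θ) / Z'| ≤ δ) :
    max (⨆ θ : Set.Icc (-b) b, fx * |Y * Real.cos (θ : ℝ) - X * Real.sin (θ : ℝ)| / Z)
        (⨆ θ : Set.Icc (-b) b, fy * |X * Real.cos (θ : ℝ) - Y * Real.sin (θ : ℝ)| / Z) ≤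
      max (⨆ θ : Set.Icc (-b) b, fx * |Y' * Real.cos (θ : ℝ) - X' * Real.sin (θ : ℝ)| / Z')
          (⨆ θ : Set.Icc (-b) b, fy * |X' * Real.cos (θ : ℝ) - Y' * Real.sin (θ : ℝ)| / Z') +
        max (fx / fy) (fy / fx) * δ := by
  have hZpos : 0 < Z := lt_of_lt_of_le hZ' hZ
  haveI : Nonempty (Set.Icc (-b) b) := ⟨⟨0, by constructor <;> linarith⟩⟩
  set m := max (fx / fy) (fy / fx) with hm
  have hm1 : fx / fy ≤ m := le_max_left _ _
  have hm2 : fy / fx ≤ m := le_max_right _ _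
  -- boundedness of the RHS families
  have hbdd1 : BddAbove (Set.range fun θ : Set.Icc (-b) b =>
      fx * |Y' * Real.cos (θ : ℝ) - X' * Real.sin (θ : ℝ)| / Z') := by
    refine ⟨fx * (|Y'| + |X'|) / Z', ?_⟩
    rintro _ ⟨θ, rfl⟩
    have h : |Y' * Real.cos (θ : ℝ) - X' * Real.sin (θ : ℝ)| ≤ |Y'| + |X'| := by
      calc |Y' * Real.cos (θ : ℝ) - X' * Real.sin (θ : ℝ)|
          ≤ |Y' * Real.cos (θ : ℝ)| + |X' * Real.sin (θ : ℝ)| := abs_sub _ _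
        _ ≤ |Y'| + |X'| := by
            rw [abs_mul, abs_mul]
            have := Real.abs_cos_le_one (θ : ℝ)
            have := Real.abs_sin_le_one (θ : ℝ)
            nlinarith [abs_nonneg Y', abs_nonneg X']
    dsimp only
    gcongr
  have hbdd2 : BddAbove (Set.range fun θ : Set.Icc (-b) b =>
      fy * |X' * Real.cos (θ : ℝ) - Y' * Real.sin (θ : ℝ)| / Z') := by
    refine ⟨fy * (|X'| + |Y'|) / Z', ?_⟩
    rintro _ ⟨θ, rfl⟩
    have h : |X' * Real.cos (θ : ℝ) - Y' * Real.sin (θ : ℝ)| ≤ |X'| + |Y'| := by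
      calc |X' * Real.cos (θ : ℝ) - Y' * Real.sin (θ : ℝ)|
          ≤ |X' * Real.cos (θ : ℝ)| + |Y' * Real.sin (θ : ℝ)| := abs_sub _ _
        _ ≤ |X'| + |Y'| := by
            rw [abs_mul, abs_mul]
            have := Real.abs_cos_le_one (θ : ℝ)
            have := Real.abs_sin_le_one (θ : ℝ)
            nlinarith [abs_nonneg Y', abs_nonneg X']
    dsimp only
    gcongr
  apply max_le
  · -- first sup
    apply ciSup_le
    intro θ
    have hmem : -(θ : ℝ) ∈ Set.Icc (-b) b := by
      obtain ⟨hl, hr⟩ := θ.2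
      constructor <;> linarith
    have key := h2 (-(θ : ℝ)) hmem
    rw [Real.cos_neg, Real.sin_neg] at key
    have eA : fy * (Y * Real.cos (θ : ℝ) + X * -Real.sin (θ : ℝ)) / Z =
        fy * (Y * Real.cos (θ : ℝ) - X * Real.sin (θ : ℝ)) / Z := by ring
    have eB : fy * (Y' * Real.cos (θ : ℝ) + X' * -Real.sin (θ : ℝ)) / Z' =
        fy * (Y' * Real.cos (θ : ℝ) - X' * Real.sin (θ : ℝ)) / Z' := by ring
    rw [eA, eB] at key
    set A := fy * (Y * Real.cos (θ : ℝ) - X * Real.sin (θ : ℝ)) / Z with hA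
    set B := fy * (Y' * Real.cos (θ : ℝ) - X' * Real.sin (θ : ℝ)) / Z' with hB
    have hAabs : |A| = fy * |Y * Real.cos (θ : ℝ) - X * Real.sin (θ : ℝ)| / Z := by
      rw [hA, abs_div, abs_mul, abs_of_pos hfy, abs_of_pos hZpos]
    have hBabs : |B| = fy * |Y' * Real.cos (θ : ℝ) - X' * Real.sin (θ : ℝ)| / Z' := by
      rw [hB, abs_div, abs_mul, abs_of_pos hfy, abs_of_pos hZ']
    have habs : |A| ≤ |B| + δ := by
      have := abs_sub_abs_le_abs_sub A B
      linarith
    have hrw : fx * |Y * Real.cos (θ : ℝ) - X * Real.sin (θ : ℝ)| / Z = (fx / fy) * |A| := by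
      rw [hAabs]; field_simp
    rw [hrw]
    have hfxfy : 0 ≤ fx / fy := le_of_lt (div_pos hfx hfy)
    calc (fx / fy) * |A| ≤ (fx / fy) * (|B| + δ) :=
          mul_le_mul_of_nonneg_left habs hfxfy
      _ = fx * |Y' * Real.cos (θ : ℝ) - X' * Real.sin (θ : ℝ)| / Z' + (fx / fy) * δ := by
          rw [hBabs]; field_simp
      _ ≤ (⨆ θ : Set.Icc (-b) b, fx * |Y' * Real.cos (θ : ℝ) - X' * Real.sin (θ : ℝ)| / Z')
            + m * δ := by
          exact add_le_add (le_ciSup hbdd1 θ) (mul_le_mul_of_nonneg_right hm1 hδ)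
      _ ≤ _ := by gcongr; exact le_max_left _ _
  · -- second sup
    apply ciSup_le
    intro θ
    have hmem : -(θ : ℝ) ∈ Set.Icc (-b) b := by
      obtain ⟨hl, hr⟩ := θ.2
      constructor <;> linarith
    have key := h1 (-(θ : ℝ)) hmem
    rw [Real.cos_neg, Real.sin_neg] at key
    have eA : fx * (X * Real.cos (θ : ℝ) + Y * -Real.sin (θ : ℝ)) / Z =
        fx * (X * Real.cos (θ : ℝ) - Y * Real.sin (θ : ℝ)) / Z := by ring
    have eB : fx * (X' * Real.cos (θ : ℝ) + Y' * -Real.sin (θ : ℝ)) / Z' =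
        fx * (X' * Real.cos (θ : ℝ) - Y' * Real.sin (θ : ℝ)) / Z' := by ring
    rw [eA, eB] at key
    set A := fx * (X * Real.cos (θ : ℝ) - Y * Real.sin (θ : ℝ)) / Z with hA
    set B := fx * (X' * Real.cos (θ : ℝ) - Y' * Real.sin (θ : ℝ)) / Z' with hB
    have hAabs : |A| = fx * |X * Real.cos (θ : ℝ) - Y * Real.sin (θ : ℝ)| / Z := by
      rw [hA, abs_div, abs_mul, abs_of_pos hfx, abs_of_pos hZpos]
    have hBabs : |B| = fx * |X' * Real.cos (θ : ℝ) - Y' * Real.sin (θ : ℝ)| / Z' := by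
      rw [hB, abs_div, abs_mul, abs_of_pos hfx, abs_of_pos hZ']
    have habs : |A| ≤ |B| + δ := by
      have := abs_sub_abs_le_abs_sub A B
      linarith
    have hrw : fy * |X * Real.cos (θ : ℝ) - Y * Real.sin (θ : ℝ)| / Z = (fy / fx) * |A| := by
      rw [hAabs]; field_simp
    rw [hrw]
    have hfyfx : 0 ≤ fy / fx := le_of_lt (div_pos hfy hfx)
    calc (fy / fx) * |A| ≤ (fy / fx) * (|B| + δ) :=
          mul_le_mul_of_nonneg_left habs hfyfx
      _ = fy * |X' * Real.cos (θ : ℝ) - Y' * Real.sin (θ : ℝ)| / Z' + (fy / fx) * δ := by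
          rw [hBabs]; field_simp
      _ ≤ (⨆ θ : Set.Icc (-b) b, fy * |X' * Real.cos (θ : ℝ) - Y' * Real.sin (θ : ℝ)| / Z')
            + m * δ := by
          exact add_le_add (le_ciSup hbdd2 θ) (mul_le_mul_of_nonneg_right hm2 hδ)
      _ ≤ _ := by gcongr; exact le_max_right _ _
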